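/- In the polynomial ring ℂ[x_1, x_2, x_3], let I be the ideal generated by the three power sums x_1³ + x_2³ + x_3³, x_1⁵ + x_2⁵ + x_3⁵, and x_1⁷ + x_2⁷ + x_3⁷. Then the radical of I equals the intersection of ideals ⟨x_1 + x_2, x_3⟩ ∩ ⟨x_1 + x_3, x_2⟩ ∩ ⟨x_2 + x_3, x_1⟩. -/

import Mathlib

open MvPolynomial

private lemma two_sum_zero (a b : ℂ) (h3 : a^3 + b^3 = 0) (h5 : a^5 + b^5 = 0) :
    a + b = 0 := by
  by_cases hb : b = 0
  · subst hb
    have ha : a = 0 := pow_eq_zero_iff (n := 3) (by norm_num) |>.mp (by linear_combination h3)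
    simp [ha]
  · have h : b^3 * (b^2 - a^2) = 0 := by linear_combination h5 - a^2 * h3
    rcases mul_eq_zero.mp h with h' | h'
    · exact absurd (pow_eq_zero_iff (n := 3) (by norm_num) |>.mp h') hb
    · have hsq : b^2 = a^2 := by linear_combination h'
      have : b^2 * (a + b) = 0 := by linear_combination h3 + a * hsq
      rcases mul_eq_zero.mp this with h'' | h''
      · exact absurd (pow_eq_zero_iff (n := 2) (by norm_num) |>.mp h'') hb
      · exact h''

private lemma abc_zero (a b c : ℂ) (h3 : a^3+b^3+c^3 = 0) (h5 : a^5+b^5+c^5 = 0)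
    (h7 : a^7+b^7+c^7 = 0) : a*b*c = 0 := by
  have hB : (a*b*c - (a+b+c)*(a*b+a*c+b*c)) * (a^4+b^4+c^4) = 0 := by
    linear_combination h7 - ((a+b+c)^2 - (a*b+a*c+b*c))*h5 - (a+b+c)*(a*b*c)*h3
  rcases mul_eq_zero.mp hB with h | hp4
  · have hs3 : (a+b+c)^3 = 0 := by linear_combination h3 - 3*h
    have hs : a+b+c = 0 := pow_eq_zero_iff (n := 3) (by norm_num) |>.mp hs3
    linear_combination h + (a*b+a*c+b*c)*hs
  · have hrp2 : (a*b*c)*(a^2+b^2+c^2) = 0 := by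
      linear_combination h5 + (a*b+a*c+b*c)*h3 - (a+b+c)*hp4
    rcases mul_eq_zero.mp hrp2 with hr | hp2
    · exact hr
    · have hrs : (a*b*c)*(a+b+c) = 0 := by
        linear_combination hp4 + (a*b+a*c+b*c)*hp2 - (a+b+c)*h3
      rcases mul_eq_zero.mp hrs with hr | hs
      · exact hr
      · linear_combination h3/3 - (a+b+c)^2*hs/3 + (a*b+a*c+b*c)*hs

private lemma sol (a b c : ℂ) (h3 : a^3+b^3+c^3 = 0) (h5 : a^5+b^5+c^5 = 0)
    (h7 : a^7+b^7+c^7 = 0) :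
    (a + b = 0 ∧ c = 0) ∨ (a + c = 0 ∧ b = 0) ∨ (b + c = 0 ∧ a = 0) := by
  rcases mul_eq_zero.mp (abc_zero a b c h3 h5 h7) with hab | hc
  · rcases mul_eq_zero.mp hab with ha | hb
    · exact Or.inr (Or.inr ⟨two_sum_zero b c (by linear_combination h3 - a^2*ha)
        (by linear_combination h5 - a^4*ha), ha⟩)
    · exact Or.inr (Or.inl ⟨two_sum_zero a c (by linear_combination h3 - b^2*hb)
        (by linear_combination h5 - b^4*hb), hb⟩)
  · exact Or.inl ⟨two_sum_zero a b (by linear_combination h3 - c^2*hc)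
      (by linear_combination h5 - c^4*hc), hc⟩

private lemma ker_le_span (g : Fin 3 → Polynomial ℂ) (i : Fin 3)
    (u v : MvPolynomial (Fin 3) ℂ)
    (h : ∀ m : Fin 3, X m - Polynomial.aeval (X i : MvPolynomial (Fin 3) ℂ) (g m) ∈
      Ideal.span {u, v})
    (f : MvPolynomial (Fin 3) ℂ) (hf : MvPolynomial.aeval g f = 0) :
    f ∈ Ideal.span {u, v} := by
  set J := Ideal.span {u, v}
  let q : MvPolynomial (Fin 3) ℂ →ₐ[ℂ] MvPolynomial (Fin 3) ℂ ⧸ J := Ideal.Quotient.mkₐ ℂ J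
  let s : Polynomial ℂ →ₐ[ℂ] MvPolynomial (Fin 3) ℂ ⧸ J := Polynomial.aeval (q (X i))
  have hcomp : s.comp (MvPolynomial.aeval g) = q := by
    apply MvPolynomial.algHom_ext
    intro m
    have h1 : s (g m) = q (Polynomial.aeval (X i : MvPolynomial (Fin 3) ℂ) (g m)) := by
      have : s = q.comp (Polynomial.aeval (X i : MvPolynomial (Fin 3) ℂ)) := by
        apply Polynomial.algHom_ext
        simp [s, q]
      rw [this]; rfl
    have h2 : q (X m - Polynomial.aeval (X i : MvPolynomial (Fin 3) ℂ) (g m)) = 0 := by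
      rw [Ideal.Quotient.mkₐ_eq_mk, Ideal.Quotient.eq_zero_iff_mem]
      exact h m
    simp only [AlgHom.comp_apply, aeval_X, h1]
    rw [map_sub] at h2
    linear_combination -h2
  have : q f = 0 := by
    have := congrArg (fun φ => φ f) hcomp
    simp only [AlgHom.comp_apply] at this
    rw [← this, hf, map_zero]
  rwa [Ideal.Quotient.mkₐ_eq_mk, Ideal.Quotient.eq_zero_iff_mem] at this

private lemma eval_aeval_poly (g : Fin 3 → Polynomial ℂ) (t : ℂ) (f : MvPolynomial (Fin 3) ℂ) :
    (MvPolynomial.aeval g f).eval t = eval (fun m => (g m).eval t) f := by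
  have h : (Polynomial.aeval t : Polynomial ℂ →ₐ[ℂ] ℂ).comp (MvPolynomial.aeval g) =
      MvPolynomial.aeval (fun m => (g m).eval t) := by
    apply MvPolynomial.algHom_ext
    intro m
    simp [Polynomial.coe_aeval_eq_eval]
  have := congrArg (fun φ : MvPolynomial (Fin 3) ℂ →ₐ[ℂ] ℂ => φ f) h
  simp only [AlgHom.comp_apply] at this
  have h1 : Polynomial.eval t ((aeval g) f) = Polynomial.aeval t ((aeval g) f) := by
    rw [Polynomial.coe_aeval_eq_eval]
  have h2 : (aeval fun m => Polynomial.eval t (g m)) f = eval (fun m => (g m).eval t) f := by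
    rw [← MvPolynomial.coe_aeval_eq_eval]; rfl
  rw [h1, this, h2]

private lemma point_mem_zeroLocus (x : Fin 3 → ℂ)
    (h3 : (x 0)^3 + (x 1)^3 + (x 2)^3 = 0)
    (h5 : (x 0)^5 + (x 1)^5 + (x 2)^5 = 0)
    (h7 : (x 0)^7 + (x 1)^7 + (x 2)^7 = 0) :
    x ∈ zeroLocus ℂ (Ideal.span {(X 0 ^ 3 + X 1 ^ 3 + X 2 ^ 3 : MvPolynomial (Fin 3) ℂ),
        X 0 ^ 5 + X 1 ^ 5 + X 2 ^ 5, X 0 ^ 7 + X 1 ^ 7 + X 2 ^ 7}) := by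
  intro p hp
  have hle : Ideal.span {(X 0 ^ 3 + X 1 ^ 3 + X 2 ^ 3 : MvPolynomial (Fin 3) ℂ),
      X 0 ^ 5 + X 1 ^ 5 + X 2 ^ 5, X 0 ^ 7 + X 1 ^ 7 + X 2 ^ 7} ≤ vanishingIdeal ℂ {x} := by
    rw [Ideal.span_le]
    rintro p (rfl | rfl | rfl) <;>
    · rw [SetLike.mem_coe, mem_vanishingIdeal_iff]
      rintro y rfl
      simpa using by assumption
  exact hle hp x rfl

/-- In `ℂ[x₁,x₂,x₃]`, the radical of the ideal generated by the power sums
`p₃, p₅, p₇` equals `⟨x₁+x₂, x₃⟩ ∩ ⟨x₁+x₃, x₂⟩ ∩ ⟨x₂+x₃, x₁⟩`. -/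
theorem radical_powerSums_357 :
    (Ideal.span {(X 0 ^ 3 + X 1 ^ 3 + X 2 ^ 3 : MvPolynomial (Fin 3) ℂ),
        X 0 ^ 5 + X 1 ^ 5 + X 2 ^ 5,
        X 0 ^ 7 + X 1 ^ 7 + X 2 ^ 7}).radical =
      Ideal.span {(X 0 + X 1 : MvPolynomial (Fin 3) ℂ), X 2} ⊓
      Ideal.span {(X 0 + X 2 : MvPolynomial (Fin 3) ℂ), X 1} ⊓
      Ideal.span {(X 1 + X 2 : MvPolynomial (Fin 3) ℂ), X 0} := by
  rw [← MvPolynomial.vanishingIdeal_zeroLocus_eq_radical (K := ℂ)]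
  apply le_antisymm
  · intro f hf
    simp only [mem_vanishingIdeal_iff, MvPolynomial.coe_aeval_eq_eval] at hf
    refine Ideal.mem_inf.mpr ⟨Ideal.mem_inf.mpr ⟨?_, ?_⟩, ?_⟩
    · refine ker_le_span ![Polynomial.X, -Polynomial.X, 0] 0 _ _ ?_ f ?_
      · intro m
        fin_cases m
        · show X 0 - Polynomial.aeval (X 0 : MvPolynomial (Fin 3) ℂ)
            (![Polynomial.X, -Polynomial.X, 0] 0) ∈ _
          simp
        · show X 1 - Polynomial.aeval (X 0 : MvPolynomial (Fin 3) ℂ)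
            (![Polynomial.X, -Polynomial.X, 0] 1) ∈ _
          simp only [Matrix.cons_val_one, Matrix.head_cons, Matrix.cons_val_zero, map_neg, Polynomial.aeval_X,
            sub_neg_eq_add]
          rw [show (X 1 + X 0 : MvPolynomial (Fin 3) ℂ) = X 0 + X 1 by ring]
          exact Ideal.subset_span (Set.mem_insert _ _)
        · show X 2 - Polynomial.aeval (X 0 : MvPolynomial (Fin 3) ℂ)
            (![Polynomial.X, -Polynomial.X, 0] 2) ∈ _
          simp only [Matrix.cons_val_two, Matrix.tail_cons, Matrix.head_cons, map_zero, sub_zero]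
          exact Ideal.subset_span (Set.mem_insert_of_mem _ rfl)
      · apply Polynomial.funext
        intro t
        rw [eval_aeval_poly, Polynomial.eval_zero]
        exact hf _ (point_mem_zeroLocus _ (by simp; ring) (by simp; ring) (by simp; ring))
    · refine ker_le_span ![Polynomial.X, 0, -Polynomial.X] 0 _ _ ?_ f ?_
      · intro m
        fin_cases m
        · show X 0 - Polynomial.aeval (X 0 : MvPolynomial (Fin 3) ℂ)
            (![Polynomial.X, 0, -Polynomial.X] 0) ∈ _
          simp
        · show X 1 - Polynomial.aeval (X 0 : MvPolynomial (Fin 3) ℂ)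
            (![Polynomial.X, 0, -Polynomial.X] 1) ∈ _
          simp only [Matrix.cons_val_one, Matrix.head_cons, Matrix.cons_val_zero, map_zero, sub_zero]
          exact Ideal.subset_span (Set.mem_insert_of_mem _ rfl)
        · show X 2 - Polynomial.aeval (X 0 : MvPolynomial (Fin 3) ℂ)
            (![Polynomial.X, 0, -Polynomial.X] 2) ∈ _
          simp only [Matrix.cons_val_two, Matrix.tail_cons, Matrix.head_cons, map_neg,
            Polynomial.aeval_X, sub_neg_eq_add]
          rw [show (X 2 + X 0 : MvPolynomial (Fin 3) ℂ) = X 0 + X 2 by ring]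
          exact Ideal.subset_span (Set.mem_insert _ _)
      · apply Polynomial.funext
        intro t
        rw [eval_aeval_poly, Polynomial.eval_zero]
        exact hf _ (point_mem_zeroLocus _ (by simp; ring) (by simp; ring) (by simp; ring))
    · refine ker_le_span ![0, Polynomial.X, -Polynomial.X] 1 _ _ ?_ f ?_
      · intro m
        fin_cases m
        · show X 0 - Polynomial.aeval (X 1 : MvPolynomial (Fin 3) ℂ)
            (![0, Polynomial.X, -Polynomial.X] 0) ∈ _
          simp only [Matrix.cons_val_zero, map_zero, sub_zero]
          exact Ideal.subset_span (Set.mem_insert_of_mem _ rfl)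
        · show X 1 - Polynomial.aeval (X 1 : MvPolynomial (Fin 3) ℂ)
            (![0, Polynomial.X, -Polynomial.X] 1) ∈ _
          simp
        · show X 2 - Polynomial.aeval (X 1 : MvPolynomial (Fin 3) ℂ)
            (![0, Polynomial.X, -Polynomial.X] 2) ∈ _
          simp only [Matrix.cons_val_two, Matrix.tail_cons, Matrix.head_cons, map_neg,
            Polynomial.aeval_X, sub_neg_eq_add]
          rw [show (X 2 + X 1 : MvPolynomial (Fin 3) ℂ) = X 1 + X 2 by ring]
          exact Ideal.subset_span (Set.mem_insert _ _)
      · apply Polynomial.funext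
        intro t
        rw [eval_aeval_poly, Polynomial.eval_zero]
        exact hf _ (point_mem_zeroLocus _ (by simp; ring) (by simp; ring) (by simp; ring))
  · intro f hf
    rw [Ideal.mem_inf, Ideal.mem_inf] at hf
    obtain ⟨⟨hf1, hf2⟩, hf3⟩ := hf
    simp only [mem_vanishingIdeal_iff, MvPolynomial.coe_aeval_eq_eval]
    intro x hx
    have h3 : (x 0)^3 + (x 1)^3 + (x 2)^3 = 0 := by
      simpa using hx _ (Ideal.subset_span (Set.mem_insert _ _))
    have h5 : (x 0)^5 + (x 1)^5 + (x 2)^5 = 0 := by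
      simpa using hx _ (Ideal.subset_span (Set.mem_insert_of_mem _ (Set.mem_insert _ _)))
    have h7 : (x 0)^7 + (x 1)^7 + (x 2)^7 = 0 := by
      simpa using hx _ (Ideal.subset_span
        (Set.mem_insert_of_mem _ (Set.mem_insert_of_mem _ rfl)))
    rcases sol (x 0) (x 1) (x 2) h3 h5 h7 with ⟨h, h'⟩ | ⟨h, h'⟩ | ⟨h, h'⟩
    · obtain ⟨p, q, hpq⟩ := Ideal.mem_span_pair.mp hf1
      rw [← hpq]
      simp only [map_add, map_mul, eval_X, aeval_X]
      rw [h, h']; ring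
    · obtain ⟨p, q, hpq⟩ := Ideal.mem_span_pair.mp hf2
      rw [← hpq]
      simp only [map_add, map_mul, eval_X, aeval_X]
      rw [h, h']; ring
    · obtain ⟨p, q, hpq⟩ := Ideal.mem_span_pair.mp hf3
      rw [← hpq]
      simp only [map_add, map_mul, eval_X, aeval_X]
      rw [h, h']; ring
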